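/- Any linear order M of cardinality λ ≥ ℵ₀ has at most λ cuts of cofinality (σ₁, σ₂) with σ₁ ≠ σ₂ (σ₁, σ₂ regular infinite cardinals). -/

import Mathlib

universe u

open Cardinal

/-- The cofinality of a suborder `C`: the least cardinality of a cofinal subset of `C`. -/
noncomputable def downCof {M : Type u} [LinearOrder M] (C : Set M) : Cardinal.{u} :=
  sInf {c : Cardinal.{u} | ∃ A ⊆ C, (∀ x ∈ C, ∃ a ∈ A, x ≤ a) ∧ #A = c}

/-- The coinitiality of a suborder `C`: the least cardinality of a coinitial subset of `C`. -/
noncomputable def upCof {M : Type u} [LinearOrder M] (C : Set M) : Cardinal.{u} :=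
  sInf {c : Cardinal.{u} | ∃ B ⊆ C, (∀ x ∈ C, ∃ b ∈ B, b ≤ x) ∧ #B = c}

namespace Stmt6

open Set

variable {M : Type u} [LinearOrder M]

lemma downCof_le {C A : Set M} (h1 : A ⊆ C) (h2 : ∀ x ∈ C, ∃ a ∈ A, x ≤ a) :
    downCof C ≤ #A :=
  csInf_le' ⟨A, h1, h2, rfl⟩

lemma upCof_le {C B : Set M} (h1 : B ⊆ C) (h2 : ∀ x ∈ C, ∃ b ∈ B, b ≤ x) :
    upCof C ≤ #B :=
  csInf_le' ⟨B, h1, h2, rfl⟩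

lemma exists_downCof (C : Set M) :
    ∃ A ⊆ C, (∀ x ∈ C, ∃ a ∈ A, x ≤ a) ∧ #A = downCof C := by
  have : downCof C ∈ {c : Cardinal.{u} | ∃ A ⊆ C, (∀ x ∈ C, ∃ a ∈ A, x ≤ a) ∧ #A = c} :=
    csInf_mem ⟨#C, C, subset_rfl, fun x hx => ⟨x, hx, le_rfl⟩, rfl⟩
  exact this

lemma exists_upCof (C : Set M) :
    ∃ B ⊆ C, (∀ x ∈ C, ∃ b ∈ B, b ≤ x) ∧ #B = upCof C := by
  have : upCof C ∈ {c : Cardinal.{u} | ∃ B ⊆ C, (∀ x ∈ C, ∃ b ∈ B, b ≤ x) ∧ #B = c} :=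
    csInf_mem ⟨#C, C, subset_rfl, fun x hx => ⟨x, hx, le_rfl⟩, rfl⟩
  exact this

/-- If `τ` is cofinal in `D` then they have the same cofinality. -/
lemma downCof_congr {τ D : Set M} (hsub : τ ⊆ D) (hco : ∀ x ∈ D, ∃ t ∈ τ, x ≤ t) :
    downCof D = downCof τ := by
  apply le_antisymm
  · obtain ⟨A, hA1, hA2, hA3⟩ := exists_downCof τ
    refine le_trans (downCof_le (hA1.trans hsub) ?_) hA3.le
    intro x hx
    obtain ⟨t, ht, hxt⟩ := hco x hx
    obtain ⟨a, ha, hta⟩ := hA2 t ht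
    exact ⟨a, ha, hxt.trans hta⟩
  · obtain ⟨A, hA1, hA2, hA3⟩ := exists_downCof D
    choose g hg1 hg2 using fun a : A => hco a (hA1 a.2)
    have h1 : downCof τ ≤ #(Set.range g) := by
      refine downCof_le (range_subset_iff.2 hg1) ?_
      intro x hx
      obtain ⟨a, ha, hxa⟩ := hA2 x (hsub hx)
      exact ⟨g ⟨a, ha⟩, mem_range_self _, hxa.trans (hg2 ⟨a, ha⟩)⟩
    exact h1.trans (mk_range_le.trans hA3.le)

lemma upCof_congr {τ D : Set M} (hsub : τ ⊆ D) (hco : ∀ x ∈ D, ∃ t ∈ τ, t ≤ x) :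
    upCof D = upCof τ :=
  downCof_congr (M := Mᵒᵈ) hsub hco

lemma downCof_subtype {N : Set M} (A : Set ↥N) :
    downCof A = downCof (Subtype.val '' A) := by
  apply le_antisymm
  · obtain ⟨B, hB1, hB2, hB3⟩ := exists_downCof (Subtype.val '' A)
    have hBr : B ⊆ Set.range (Subtype.val : ↥N → M) :=
      hB1.trans (image_subset_range _ _)
    have hpre : (Subtype.val ⁻¹' B : Set ↥N) ⊆ A := by
      intro z hz
      obtain ⟨w, hw, hwz⟩ := hB1 hz
      rwa [← Subtype.coe_injective hwz]
    have hcof : ∀ x ∈ A, ∃ a ∈ (Subtype.val ⁻¹' B : Set ↥N), x ≤ a := by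
      intro x hx
      obtain ⟨b, hb, hxb⟩ := hB2 (↑x) ⟨x, hx, rfl⟩
      obtain ⟨w, rfl⟩ := hBr hb
      exact ⟨w, hb, hxb⟩
    refine le_trans (downCof_le hpre hcof) ?_
    rw [mk_preimage_of_injective_of_subset_range _ _ Subtype.coe_injective hBr, hB3]
  · obtain ⟨B, hB1, hB2, hB3⟩ := exists_downCof A
    have hcof : ∀ x ∈ Subtype.val '' A, ∃ a ∈ Subtype.val '' B, x ≤ a := by
      rintro x ⟨z, hz, rfl⟩
      obtain ⟨b, hb, hzb⟩ := hB2 z hz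
      exact ⟨b, ⟨b, hb, rfl⟩, hzb⟩
    refine le_trans (downCof_le (image_mono hB1) hcof) ?_
    rw [mk_image_eq Subtype.coe_injective, hB3]

lemma upCof_subtype {N : Set M} (A : Set ↥N) :
    upCof A = upCof (Subtype.val '' A) := by
  apply le_antisymm
  · obtain ⟨B, hB1, hB2, hB3⟩ := exists_upCof (Subtype.val '' A)
    have hBr : B ⊆ Set.range (Subtype.val : ↥N → M) :=
      hB1.trans (image_subset_range _ _)
    have hpre : (Subtype.val ⁻¹' B : Set ↥N) ⊆ A := by
      intro z hz
      obtain ⟨w, hw, hwz⟩ := hB1 hz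
      rwa [← Subtype.coe_injective hwz]
    have hcof : ∀ x ∈ A, ∃ a ∈ (Subtype.val ⁻¹' B : Set ↥N), a ≤ x := by
      intro x hx
      obtain ⟨b, hb, hxb⟩ := hB2 (↑x) ⟨x, hx, rfl⟩
      obtain ⟨w, rfl⟩ := hBr hb
      exact ⟨w, hb, hxb⟩
    refine le_trans (upCof_le hpre hcof) ?_
    rw [mk_preimage_of_injective_of_subset_range _ _ Subtype.coe_injective hBr, hB3]
  · obtain ⟨B, hB1, hB2, hB3⟩ := exists_upCof A
    have hcof : ∀ x ∈ Subtype.val '' A, ∃ a ∈ Subtype.val '' B, a ≤ x := by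
      rintro x ⟨z, hz, rfl⟩
      obtain ⟨b, hb, hzb⟩ := hB2 z hz
      exact ⟨b, ⟨b, hb, rfl⟩, hzb⟩
    refine le_trans (upCof_le (image_mono hB1) hcof) ?_
    rw [mk_image_eq Subtype.coe_injective, hB3]

/-- The initial segment of the well-order `r` up to and including `m`. -/
def seg (r : M → M → Prop) (m : M) : Set M := {y | r y m ∨ y = m}

/-- If the upper part of a cut has a coinitial subset `T`, the upper part is the
upward closure of `T`. -/
lemma compl_eq_upclosure {C : Set M} (hC : IsLowerSet C) {T : Set M} (hT : T ⊆ Cᶜ)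
    (hco : ∀ z ∈ Cᶜ, ∃ t ∈ T, t ≤ z) : Cᶜ = {z | ∃ t ∈ T, t ≤ z} := by
  ext z
  constructor
  · exact fun hz => hco z hz
  · rintro ⟨t, ht, htz⟩ hzC
    exact hT ht (hC htz hzC)

/-- A cut neither of whose traces on proper initial segments is cofinal/coinitial has
equal cofinality and coinitiality. -/
lemma downCof_eq_upCof (r : M → M → Prop) [IsWellOrder M r] {C : Set M}
    (h1 : ¬ ∃ m : M, ∀ z ∈ Cᶜ, ∃ t ∈ Cᶜ ∩ seg r m, t ≤ z)
    (h2 : ¬ ∃ m : M, ∀ z ∈ C, ∃ t ∈ C ∩ seg r m, z ≤ t) :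
    downCof C = upCof Cᶜ := by
  push_neg at h1 h2
  choose y hy1 hy2 using h1
  choose x hx1 hx2 using h2
  apply le_antisymm
  · obtain ⟨B, hB1, hB2, hB3⟩ := exists_upCof Cᶜ
    have key : ∀ z ∈ C, ∃ b ∈ B, z ∈ seg r b := by
      intro z hz
      by_contra hcon
      push_neg at hcon
      obtain ⟨b, hb, hble⟩ := hB2 (y z) (hy1 z)
      have hbz : b ∈ seg r z := by
        rcases trichotomous_of r b z with h | h | h
        · exact Or.inl h
        · exact Or.inr h
        · exact absurd (Or.inl h) (hcon b hb)
      exact absurd hble (hy2 z b ⟨hB1 hb, hbz⟩).not_ge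
    refine le_trans (downCof_le (A := x '' B) ?_ ?_) (le_trans mk_image_le hB3.le)
    · rintro _ ⟨b, hb, rfl⟩
      exact hx1 b
    · intro z hz
      obtain ⟨b, hb, hzb⟩ := key z hz
      exact ⟨x b, ⟨b, hb, rfl⟩, (hx2 b z ⟨hz, hzb⟩).le⟩
  · obtain ⟨A, hA1, hA2, hA3⟩ := exists_downCof C
    have key : ∀ z ∈ Cᶜ, ∃ a ∈ A, z ∈ seg r a := by
      intro z hz
      by_contra hcon
      push_neg at hcon
      obtain ⟨a, ha, hale⟩ := hA2 (x z) (hx1 z)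
      have haz : a ∈ seg r z := by
        rcases trichotomous_of r a z with h | h | h
        · exact Or.inl h
        · exact Or.inr h
        · exact absurd (Or.inl h) (hcon a ha)
      exact absurd hale (hx2 z a ⟨hA1 ha, haz⟩).not_ge
    refine le_trans (upCof_le (B := y '' A) ?_ ?_) (le_trans mk_image_le hA3.le)
    · rintro _ ⟨a, ha, rfl⟩
      exact hy1 a
    · intro z hz
      obtain ⟨a, ha, hza⟩ := key z hz
      exact ⟨y a, ⟨a, ha, rfl⟩, (hy2 a z ⟨hz, hza⟩).le⟩

/-- Counting the bad cuts whose upper trace on some proper initial segment is coinitial. -/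
lemma count_aux (r : M → M → Prop) [IsWellOrder M r] (hM : ℵ₀ ≤ #M)
    (hseg : ∀ m : M, #(seg r m) < #M)
    (IH : ∀ (N : Type u) [LinearOrder N], #N < #M →
      #{C : Set N | IsLowerSet C ∧ downCof C ≠ upCof Cᶜ} ≤ max #N ℵ₀) :
    #{C : Set M | (IsLowerSet C ∧ downCof C ≠ upCof Cᶜ) ∧
      ∃ m : M, ∀ z ∈ Cᶜ, ∃ t ∈ Cᶜ ∩ seg r m, t ≤ z} ≤ #M := by
  classical
  set E1 : Set (Set M) := {C | IsLowerSet C ∧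
    ∃ m : M, (∀ z ∈ Cᶜ, ∃ t ∈ Cᶜ ∩ seg r m, t ≤ z) ∧
      downCof (C ∩ seg r m) ≠ upCof (Cᶜ ∩ seg r m)} with hE1def
  set E2 : Set (Set M) := {C | IsLowerSet C ∧
    ∃ p : M × M, (∀ z ∈ Cᶜ, ∃ t ∈ Cᶜ ∩ seg r p.1, t ≤ z) ∧
      Cᶜ ∩ seg r p.1 = {z | z ∈ seg r p.1 ∧ p.2 ≤ z}} with hE2def
  -- the covered set is contained in E1 ∪ E2
  have hcover : {C : Set M | (IsLowerSet C ∧ downCof C ≠ upCof Cᶜ) ∧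
      ∃ m : M, ∀ z ∈ Cᶜ, ∃ t ∈ Cᶜ ∩ seg r m, t ≤ z} ⊆ E1 ∪ E2 := by
    rintro C ⟨⟨hlow, hne⟩, m, hm⟩
    by_cases htr : downCof (C ∩ seg r m) = upCof (Cᶜ ∩ seg r m)
    · right
      have e1 : upCof Cᶜ = upCof (Cᶜ ∩ seg r m) :=
        upCof_congr inter_subset_left hm
      have hncof : ¬ ∀ z ∈ C, ∃ t ∈ C ∩ seg r m, z ≤ t := by
        intro hcof
        exact hne (by rw [downCof_congr inter_subset_left hcof, htr, ← e1])
      push_neg at hncof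
      obtain ⟨xx, hxC, hx⟩ := hncof
      refine ⟨hlow, (m, xx), hm, ?_⟩
      ext z
      simp only [mem_inter_iff, mem_setOf_eq, mem_compl_iff]
      constructor
      · rintro ⟨hz1, hz2⟩
        refine ⟨hz2, ?_⟩
        by_contra hxz
        exact hz1 (hlow (not_le.1 hxz).le hxC)
      · rintro ⟨hz2, hxz⟩
        refine ⟨fun hzC => ?_, hz2⟩
        exact absurd hxz (hx z ⟨hzC, hz2⟩).not_ge
    · exact Or.inl ⟨hlow, m, hm, htr⟩
  -- counting E2
  have hE2 : #E2 ≤ #M := by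
    have hinj : ∀ (C : ↥E2), ∃ p : M × M,
        (∀ z ∈ C.1ᶜ, ∃ t ∈ C.1ᶜ ∩ seg r p.1, t ≤ z) ∧
        C.1ᶜ ∩ seg r p.1 = {z | z ∈ seg r p.1 ∧ p.2 ≤ z} := fun C => C.2.2
    have key : ∀ (C : ↥E2), C.1ᶜ =
        {z | ∃ t ∈ {w | w ∈ seg r (Classical.choose (hinj C)).1 ∧
          (Classical.choose (hinj C)).2 ≤ w}, t ≤ z} := by
      intro C
      obtain ⟨h1, h2⟩ := Classical.choose_spec (hinj C)
      rw [← h2]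
      exact compl_eq_upclosure C.2.1 inter_subset_left h1
    have : #E2 ≤ #(M × M) := by
      refine mk_le_of_injective (f := fun C => Classical.choose (hinj C)) ?_
      intro C C' heq
      have heq' : Classical.choose (hinj C) = Classical.choose (hinj C') := heq
      have hsets := congrArg (fun p : M × M =>
        {z | ∃ t ∈ {w | w ∈ seg r p.1 ∧ p.2 ≤ w}, t ≤ z}) heq'
      apply Subtype.ext
      apply compl_injective
      exact (key C).trans (hsets.trans (key C').symm)
    refine le_trans this ?_
    rw [mk_prod, lift_id, mul_eq_self hM]
  -- counting E1
  have hE1 : #E1 ≤ #M := by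
    have hinj : ∀ (C : ↥E1), ∃ m : M,
        (∀ z ∈ C.1ᶜ, ∃ t ∈ C.1ᶜ ∩ seg r m, t ≤ z) ∧
        downCof (C.1 ∩ seg r m) ≠ upCof (C.1ᶜ ∩ seg r m) := fun C => C.2.2
    set F : ↥E1 → Σ m : M, ↥{D : Set ↥(seg r m) | IsLowerSet D ∧ downCof D ≠ upCof Dᶜ} :=
      fun C => ⟨Classical.choose (hinj C),
        ⟨{z : ↥(seg r (Classical.choose (hinj C))) | ↑z ∈ C.1}, by
          constructor
          · intro a b hba ha
            exact C.2.1 (Subtype.coe_le_coe.2 hba) ha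
          · have e1 : Subtype.val '' {z : ↥(seg r (Classical.choose (hinj C))) | ↑z ∈ C.1}
                = C.1 ∩ seg r (Classical.choose (hinj C)) := by
              rw [show {z : ↥(seg r (Classical.choose (hinj C))) | ↑z ∈ C.1}
                = (Subtype.val ⁻¹' C.1) from rfl, Subtype.image_preimage_coe, inter_comm]
            have e2 : Subtype.val '' ({z : ↥(seg r (Classical.choose (hinj C))) | ↑z ∈ C.1}ᶜ)
                = C.1ᶜ ∩ seg r (Classical.choose (hinj C)) := by
              rw [show ({z : ↥(seg r (Classical.choose (hinj C))) | ↑z ∈ C.1}ᶜ)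
                = (Subtype.val ⁻¹' C.1ᶜ) from rfl, Subtype.image_preimage_coe, inter_comm]
            rw [downCof_subtype, upCof_subtype, e1, e2]
            exact (Classical.choose_spec (hinj C)).2⟩⟩ with hF
    set G : (Σ m : M, ↥{D : Set ↥(seg r m) | IsLowerSet D ∧ downCof D ≠ upCof Dᶜ}) → Set M :=
      fun s => {z | ∃ t ∈ Subtype.val '' ((s.2 : Set ↥(seg r s.1))ᶜ), t ≤ z} with hG
    have hFinj : Function.Injective F := by
      have hcomp : ∀ (C : ↥E1), C.1ᶜ = G (F C) := by
        intro C
        have h1 := (Classical.choose_spec (hinj C)).1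
        have e2 : Subtype.val '' (((F C).2 : Set ↥(seg r (F C).1))ᶜ)
            = C.1ᶜ ∩ seg r (Classical.choose (hinj C)) := by
          rw [show (((F C).2 : Set ↥(seg r (F C).1))ᶜ)
            = (Subtype.val ⁻¹' C.1ᶜ) from rfl, Subtype.image_preimage_coe, inter_comm]
        show C.1ᶜ = {z | ∃ t ∈ Subtype.val '' (((F C).2 : Set ↥(seg r (F C).1))ᶜ), t ≤ z}
        rw [e2]
        exact compl_eq_upclosure C.2.1 inter_subset_left h1
      intro C C' heq
      apply Subtype.ext
      apply compl_injective
      exact (hcomp C).trans ((congrArg G heq).trans (hcomp C').symm)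
    have : #E1 ≤ #(Σ m : M, ↥{D : Set ↥(seg r m) | IsLowerSet D ∧ downCof D ≠ upCof Dᶜ}) :=
      mk_le_of_injective hFinj
    refine le_trans this ?_
    rw [mk_sigma]
    have hstep : ∀ m : M,
        #{D : Set ↥(seg r m) | IsLowerSet D ∧ downCof D ≠ upCof Dᶜ} ≤ #M := by
      intro m
      have h1 : #↥(seg r m) < #M := hseg m
      refine le_trans (IH ↥(seg r m) h1) ?_
      exact max_le h1.le hM
    refine le_trans (sum_le_sum _ (fun _ => #M) hstep) ?_
    rw [sum_const', mul_eq_self hM]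
  calc #{C : Set M | (IsLowerSet C ∧ downCof C ≠ upCof Cᶜ) ∧
      ∃ m : M, ∀ z ∈ Cᶜ, ∃ t ∈ Cᶜ ∩ seg r m, t ≤ z}
      ≤ #(E1 ∪ E2 : Set (Set M)) := mk_le_mk_of_subset hcover
    _ ≤ #E1 + #E2 := mk_union_le _ _
    _ ≤ #M + #M := add_le_add hE1 hE2
    _ = #M := by rw [add_eq_self hM]

lemma bad_bound : ∀ (κ : Cardinal.{u}) (M : Type u) (inst : LinearOrder M), #M = κ →
    #{C : Set M | IsLowerSet C ∧ downCof C ≠ upCof Cᶜ} ≤ max κ ℵ₀ := by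
  intro κ
  induction κ using WellFoundedLT.induction with
  | ind κ IH =>
  intro M inst hκ
  subst hκ
  by_cases hfin : #M < ℵ₀
  · refine le_trans (le_trans (mk_subtype_le _) ?_) (le_max_right _ _)
    rw [mk_set]
    exact (power_lt_aleph0 (nat_lt_aleph0 2) hfin).le
  · push_neg at hfin
    rw [max_eq_left hfin]
    obtain ⟨r, wo, hr⟩ := Cardinal.ord_eq M
    haveI := wo
    have hseg : ∀ m : M, #(seg r m) < #M := by
      intro m
      have h1 : #{y | r y m} < #M := by
        have h2 := Cardinal.card_typein_lt (r := r) m hr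
        exact h2
      have h3 : (seg r m : Set M) = {y | r y m} ∪ {m} := by
        ext y
        simp [seg, Set.mem_union, Set.mem_singleton_iff, or_comm]
      rw [h3]
      refine lt_of_le_of_lt (mk_union_le _ _) (add_lt_of_lt hfin h1 ?_)
      rw [mk_singleton]
      exact one_lt_aleph0.trans_le hfin
    have IH' : ∀ (N : Type u) [LinearOrder N], #N < #M →
        #{C : Set N | IsLowerSet C ∧ downCof C ≠ upCof Cᶜ} ≤ max #N ℵ₀ :=
      fun N _ h => IH #N h N _ rfl
    haveI : IsWellOrder Mᵒᵈ r := wo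
    have hP1 := count_aux r hfin hseg IH'
    have hP2dual := count_aux (M := Mᵒᵈ) r hfin hseg IH'
    -- the set of bad cuts whose lower trace is eventually cofinal
    set S2 : Set (Set M) := {C | (IsLowerSet C ∧ downCof C ≠ upCof Cᶜ) ∧
      ∃ m : M, ∀ z ∈ C, ∃ t ∈ C ∩ seg r m, z ≤ t} with hS2
    have hcover : {C : Set M | IsLowerSet C ∧ downCof C ≠ upCof Cᶜ} ⊆
        {C : Set M | (IsLowerSet C ∧ downCof C ≠ upCof Cᶜ) ∧
          ∃ m : M, ∀ z ∈ Cᶜ, ∃ t ∈ Cᶜ ∩ seg r m, t ≤ z} ∪ S2 := by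
      intro C hC
      by_cases p1 : ∃ m : M, ∀ z ∈ Cᶜ, ∃ t ∈ Cᶜ ∩ seg r m, t ≤ z
      · exact Or.inl ⟨hC, p1⟩
      by_cases p2 : ∃ m : M, ∀ z ∈ C, ∃ t ∈ C ∩ seg r m, z ≤ t
      · exact Or.inr ⟨hC, p2⟩
      exact absurd (downCof_eq_upCof r p1 p2) hC.2
    -- S2 injects into the dual version of the P1 set
    have hS2le : #S2 ≤ #M := by
      have hdual : #S2 ≤ #{C : Set Mᵒᵈ | (IsLowerSet C ∧ downCof C ≠ upCof Cᶜ) ∧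
          ∃ m : Mᵒᵈ, ∀ z ∈ Cᶜ, ∃ t ∈ Cᶜ ∩ seg (M := Mᵒᵈ) r m, t ≤ z} := by
        refine mk_le_of_injective (f := fun C => ⟨(C.1ᶜ : Set Mᵒᵈ), ?_, ?_⟩) ?_
        · constructor
          · intro a b hba ha
            exact C.2.1.1.compl hba ha
          · show upCof (M := M) C.1ᶜ ≠ downCof (M := M) C.1ᶜᶜ
            rw [compl_compl]
            exact C.2.1.2.symm
        · obtain ⟨m, hm⟩ := C.2.2
          refine ⟨m, ?_⟩
          show ∀ z ∈ C.1ᶜᶜ, ∃ t ∈ C.1ᶜᶜ ∩ seg (M := Mᵒᵈ) r m, (z : M) ≤ t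
          rw [compl_compl]
          exact hm
        · intro C C' heq
          have h1 : C.1ᶜ = C'.1ᶜ := congrArg Subtype.val heq
          exact Subtype.ext (compl_injective h1)
      exact hdual.trans hP2dual
    calc #{C : Set M | IsLowerSet C ∧ downCof C ≠ upCof Cᶜ}
        ≤ #({C : Set M | (IsLowerSet C ∧ downCof C ≠ upCof Cᶜ) ∧
            ∃ m : M, ∀ z ∈ Cᶜ, ∃ t ∈ Cᶜ ∩ seg r m, t ≤ z} ∪ S2 : Set (Set M)) :=
          mk_le_mk_of_subset hcover
      _ ≤ _ + _ := mk_union_le _ _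
      _ ≤ #M + #M := add_le_add hP1 hS2le
      _ = #M := add_eq_self hfin

end Stmt6

/-- Any infinite linear order `M` has at most `#M` cuts of cofinality
`(σ₁, σ₂)` where `σ₁ ≠ σ₂` are regular infinite cardinals.  A cut is identified with its
lower part `C` (a lower set, with upper part `Cᶜ`). -/
theorem stmt_6 (M : Type u) [LinearOrder M] (hM : Cardinal.aleph0 ≤ #M) :
    #{C : Set M // IsLowerSet C ∧ (downCof C).IsRegular ∧ (upCof Cᶜ).IsRegular ∧
        downCof C ≠ upCof Cᶜ} ≤ #M := by
  have h1 : #{C : Set M // IsLowerSet C ∧ (downCof C).IsRegular ∧ (upCof Cᶜ).IsRegular ∧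
      downCof C ≠ upCof Cᶜ} ≤ #{C : Set M | IsLowerSet C ∧ downCof C ≠ upCof Cᶜ} :=
    Cardinal.mk_le_mk_of_subset (fun C hC => ⟨hC.1, hC.2.2.2⟩)
  have h2 := Stmt6.bad_bound #M M inferInstance rfl
  rw [max_eq_left hM] at h2
  exact h1.trans h2
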